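/- The multiplication of groves of planar binary trees is distributive on the left with respect to the left sum, the right sum and the sum: for all groves A, A', B of positive degree, (A ⊣ A') × B = (A × B) ⊣ (A' × B), (A ⊢ A') × B = (A × B) ⊢ (A' × B), and (A + A') × B = (A × B) + (A' × B). -/

import Mathlib

/-- A planar binary tree: a leaf `|` or a grafting `x ∨ y`. -/
inductive PBT : Type
  | leaf : PBT
  | node : PBT → PBT → PBT
  deriving DecidableEq

namespace PBT

/-- The degree: number of internal vertices. -/
def deg : PBT → ℕ
  | leaf => 0
  | node l r => deg l + deg r + 1

/-- The set `Y n` of planar binary trees of degree `n`. -/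
def Y (n : ℕ) : Set PBT := {t | t.deg = n}

/-- The `over` operation `x / y`. -/
def overOp : PBT → PBT → PBT
  | x, leaf => x
  | x, node yl yr => node (overOp x yl) yr

/-- The `under` operation `x \ y`. -/
def under : PBT → PBT → PBT
  | leaf, y => y
  | node xl xr, y => node xl (under xr y)

/-- The Tamari order, generated by `(x ∨ y) ∨ z ≤ x ∨ (y ∨ z)` and compatibility
with grafting on both sides. -/
inductive tle : PBT → PBT → Prop
  | refl (x : PBT) : tle x x
  | trans {x y z : PBT} : tle x y → tle y z → tle x z
  | rotate (x y z : PBT) : tle (node (node x y) z) (node x (node y z))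
  | node_left {x y : PBT} (z : PBT) : tle x y → tle (node x z) (node y z)
  | node_right {x y : PBT} (z : PBT) : tle x y → tle (node z x) (node z y)

/-- The sum of two planar binary trees: the Tamari interval `[x/y, x\y]`
(a subset of `Y (deg x + deg y)`). -/
def sum (x y : PBT) : Set PBT := {z | tle (overOp x y) z ∧ tle z (under x y)}

/-- A grove of degree `n`: a nonempty subset of `Y n`. -/
def Grove (n : ℕ) (A : Set PBT) : Prop := A.Nonempty ∧ ∀ x ∈ A, x.deg = n

/-- The sum of groves. -/
def gsum (A B : Set PBT) : Set PBT := ⋃ x ∈ A, ⋃ y ∈ B, sum x y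

/-- The reflection involution σ. -/
def σ : PBT → PBT
  | leaf => leaf
  | node l r => node (σ r) (σ l)

/-- The left sum `x ⊣ y` of trees (with the conventions `x ⊣ | = {x}`, `| ⊣ y = {|}`). -/
def lsum : PBT → PBT → Set PBT
  | x, leaf => {x}
  | leaf, _ => {leaf}
  | node xl xr, y => (fun z => node xl z) '' sum xr y

/-- The right sum `x ⊢ y` of trees (with the conventions `| ⊢ y = {y}`, `x ⊢ | = {|}`). -/
def rsum : PBT → PBT → Set PBT
  | leaf, y => {y}
  | _, leaf => {leaf}
  | x, node yl yr => (fun z => node z yr) '' sum x yl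

/-- Left sum of groves. -/
def glsum (A B : Set PBT) : Set PBT := ⋃ x ∈ A, ⋃ y ∈ B, lsum x y

/-- Right sum of groves. -/
def grsum (A B : Set PBT) : Set PBT := ⋃ x ∈ A, ⋃ y ∈ B, rsum x y

/-- Multiplication of a tree by a grove:
`| × B = {|}` and `(xˡ ∨ xʳ) × B = ((xˡ × B) ⊢ B) ⊣ (xʳ × B)`.
(The conventions `{|} ⊢ B = B` and `A ⊣ {|} = A` are built into `rsum`/`lsum`.) -/
def tmul : PBT → Set PBT → Set PBT
  | leaf, _ => {leaf}
  | node l r, B => glsum (grsum (tmul l B) B) (tmul r B)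

/-- Multiplication of groves. -/
def gmul (A B : Set PBT) : Set PBT := ⋃ x ∈ A, tmul x B

theorem tle.deg_eq {x y : PBT} (h : tle x y) : x.deg = y.deg := by
  induction h with
  | refl => rfl
  | trans _ _ ih1 ih2 => omega
  | rotate a b c => simp [deg]; omega
  | node_left z _ ih => simp [deg]; omega
  | node_right z _ ih => simp [deg]; omega

/-- One-step rotation relation generating the Tamari order. -/
inductive Step : PBT → PBT → Prop
  | rotate (x y z : PBT) : Step (node (node x y) z) (node x (node y z))
  | left {x y : PBT} (z : PBT) : Step x y → Step (node x z) (node y z)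
  | right {x y : PBT} (z : PBT) : Step x y → Step (node z x) (node z y)

theorem Step.tle' {x y : PBT} (h : Step x y) : tle x y := by
  induction h with
  | rotate a b c => exact tle.rotate a b c
  | left z _ ih => exact tle.node_left z ih
  | right z _ ih => exact tle.node_right z ih

theorem tle_iff_rtg {x y : PBT} : tle x y ↔ Relation.ReflTransGen Step x y := by
  constructor
  · intro h
    induction h with
    | refl => exact .refl
    | trans _ _ ih1 ih2 => exact ih1.trans ih2
    | rotate a b c => exact .single (.rotate a b c)
    | node_left z _ ih =>
        exact Relation.ReflTransGen.lift (fun t => node t z) (fun a b h => Step.left z h) _ _ ih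
    | node_right z _ ih =>
        exact Relation.ReflTransGen.lift (fun t => node z t) (fun a b h => Step.right z h) _ _ ih
  · intro h
    induction h with
    | refl => exact .refl _
    | tail _ hs ih => exact ih.trans hs.tle'

theorem Step.deg_eq {x y : PBT} (h : Step x y) : x.deg = y.deg := h.tle'.deg_eq

/-- Strictly decreasing measure along the Tamari order. -/
def fm : PBT → ℕ
  | leaf => 0
  | node l r => fm l + fm r + deg l

theorem Step.fm_lt {x y : PBT} (h : Step x y) : fm y < fm x := by
  induction h with
  | rotate a b c => simp [fm, deg]; omega
  | left z h ih => have := h.deg_eq; simp [fm]; omega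
  | right z h ih => simp [fm]; omega

theorem tle.fm_le {x y : PBT} (h : tle x y) : fm y ≤ fm x := by
  induction h with
  | refl => exact le_refl _
  | trans _ _ ih1 ih2 => omega
  | rotate a b c => simp [fm, deg]; omega
  | node_left z h ih => have := h.deg_eq; simp [fm]; omega
  | node_right z _ ih => simp [fm]; omega

theorem tle.antisymm {x y : PBT} (h1 : tle x y) (h2 : tle y x) : x = y := by
  rcases (tle_iff_rtg.mp h1).cases_head with h | ⟨m, hs, hr⟩
  · exact h
  · exfalso
    have := hs.fm_lt
    have h3 := (tle_iff_rtg.mpr hr).fm_le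
    have := h2.fm_le
    omega

theorem Step.ne {x y : PBT} (h : Step x y) : x ≠ y := by
  intro he; subst he; exact absurd h.fm_lt (lt_irrefl _)
theorem over_leaf (y : PBT) : overOp leaf y = y := by
  induction y with
  | leaf => rfl
  | node a b iha ihb => simp [overOp, iha]

theorem under_leaf (x : PBT) : under x leaf = x := by
  induction x with
  | leaf => rfl
  | node a b iha ihb => simp [under, ihb]

theorem deg_over (x y : PBT) : deg (overOp x y) = deg x + deg y := by
  induction y with
  | leaf => simp [overOp, deg]
  | node a b iha ihb => simp [overOp, deg, iha]; omega

theorem deg_under (x y : PBT) : deg (under x y) = deg x + deg y := by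
  induction x with
  | leaf => simp [under, deg]
  | node a b iha ihb => simp [under, deg, ihb]; omega

theorem tle_over_node (a b y : PBT) : tle (overOp (node a b) y) (node a (overOp b y)) := by
  induction y with
  | leaf => exact tle.refl _
  | node c d ihc ihd =>
      have h1 : tle (node (overOp (node a b) c) d) (node (node a (overOp b c)) d) :=
        tle.node_left d ihc
      exact h1.trans (tle.rotate a (overOp b c) d)

theorem tle_node_under (x c d : PBT) : tle (node (under x c) d) (under x (node c d)) := by
  induction x with
  | leaf => exact tle.refl _
  | node a b iha ihb =>
      exact (tle.rotate a (under b c) d).trans (tle.node_right a ihb)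

theorem tle_over_under (x : PBT) : ∀ y, tle (overOp x y) (under x y) := by
  induction x with
  | leaf => intro y; rw [over_leaf]; exact tle.refl _
  | node a b iha ihb =>
      intro y
      cases y with
      | leaf => rw [under_leaf]; exact tle.refl _
      | node c d =>
          exact (tle_over_node a b (node c d)).trans
            (tle.node_right a (ihb (node c d)))

theorem tle_node_node {a b c d : PBT} (h : tle (node a b) (node c d)) :
    deg c ≤ deg a ∧ (deg c = deg a → tle a c ∧ tle b d) := by
  have key : ∀ s t, Relation.ReflTransGen Step s t → ∀ a b, s = node a b →
      ∃ c d, t = node c d ∧ deg c ≤ deg a ∧ (deg c = deg a → tle a c ∧ tle b d) := by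
    intro s t h
    induction h with
    | refl => intro a b hs; exact ⟨a, b, hs, le_refl _, fun _ => ⟨tle.refl _, tle.refl _⟩⟩
    | @tail m t hrm hs ih =>
        intro a b hs'
        obtain ⟨c', d', rfl, hd, heq⟩ := ih a b hs'
        cases hs with
        | rotate p q z =>
            refine ⟨p, node q d', rfl, ?_, ?_⟩
            · simp [deg] at hd ⊢; omega
            · intro h; exfalso; simp [deg] at hd h; omega
        | left z h =>
            rename_i c''
            refine ⟨c'', d', rfl, ?_, ?_⟩
            · rw [← h.deg_eq]; exact hd
            · intro he
              have h2 := heq (by rw [h.deg_eq]; exact he)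
              exact ⟨h2.1.trans h.tle', h2.2⟩
        | right z h =>
            rename_i d''
            refine ⟨c', d'', rfl, hd, fun he => ?_⟩
            have h2 := heq he
            exact ⟨h2.1, h2.2.trans h.tle'⟩
  obtain ⟨c', d', he, h1, h2⟩ := key _ _ (tle_iff_rtg.mp h) a b rfl
  cases he
  exact ⟨h1, h2⟩
/-- `IsTail r t`: `r` is an iterated right subtree of `t`. -/
inductive IsTail (r : PBT) : PBT → Prop
  | refl : IsTail r r
  | right (a b : PBT) : IsTail r b → IsTail r (node a b)

theorem IsTail.deg_le {r t : PBT} (h : IsTail r t) : deg r ≤ deg t := by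
  induction h with
  | refl => exact le_refl _
  | right a b _ ih => simp [deg]; omega

theorem IsTail.eq_of_deg {r t : PBT} (h : IsTail r t) (hd : deg r = deg t) : r = t := by
  cases h with
  | refl => rfl
  | right a b h => have := h.deg_le; simp [deg] at hd; omega

theorem IsTail.unique {t : PBT} : ∀ {r r' : PBT}, IsTail r t → IsTail r' t →
    deg r = deg r' → r = r' := by
  induction t with
  | leaf =>
      intro r r' h1 h2 _
      cases h1; cases h2; rfl
  | node a b iha ihb =>
      intro r r' h1 h2 hd
      cases h1 with
      | refl =>
          exact (h2.eq_of_deg (by omega)).symm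
      | right _ _ h1' =>
          cases h2 with
          | refl => exact absurd (hd ▸ h1'.deg_le) (by simp [deg])
          | right _ _ h2' => exact ihb h1' h2' hd

theorem Step.tail_mono {s t : PBT} (h : Step s t) :
    ∀ r, IsTail r s → ∃ r', IsTail r' t ∧ deg r' = deg r ∧ tle r r' := by
  induction h with
  | rotate p q c =>
      intro r hr
      cases hr with
      | refl => exact ⟨_, .refl, ((Step.rotate p q c).deg_eq).symm, (Step.rotate p q c).tle'⟩
      | right _ _ hr' => exact ⟨r, .right _ _ (.right _ _ hr'), rfl, tle.refl _⟩
  | @left x y z h ih =>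
      intro r hr
      cases hr with
      | refl => exact ⟨node y z, .refl, by simp [deg, h.deg_eq], (Step.left z h).tle'⟩
      | right _ _ hr' => exact ⟨r, .right _ _ hr', rfl, tle.refl _⟩
  | @right x y z h ih =>
      intro r hr
      cases hr with
      | refl => exact ⟨node z y, .refl, by simp [deg, h.deg_eq], (Step.right z h).tle'⟩
      | right _ _ hr' =>
          obtain ⟨r', h1, h2, h3⟩ := ih r hr'
          exact ⟨r', .right _ _ h1, h2, h3⟩

theorem tle.tail_mono {s t : PBT} (h : tle s t) :
    ∀ r, IsTail r s → ∃ r', IsTail r' t ∧ deg r' = deg r ∧ tle r r' := by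
  have h' := tle_iff_rtg.mp h
  clear h
  induction h' with
  | refl => intro r hr; exact ⟨r, hr, rfl, tle.refl _⟩
  | tail _ hs ih =>
      intro r hr
      obtain ⟨r1, h1, h2, h3⟩ := ih r hr
      obtain ⟨r2, h4, h5, h6⟩ := hs.tail_mono r1 h1
      exact ⟨r2, h4, by omega, h3.trans h6⟩
theorem isTail_under {r y : PBT} (x : PBT) (h : IsTail r y) : IsTail r (under x y) := by
  induction x with
  | leaf => exact h
  | node a b iha ihb => exact .right _ _ ihb

theorem tail_deg_under {r c d : PBT} : ∀ x, IsTail r (under x (node c d)) →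
    deg r ≤ deg d ∨ deg (node c d) ≤ deg r := by
  intro x
  induction x with
  | leaf =>
      intro h
      cases h with
      | refl => right; exact le_refl _
      | right _ _ h' => left; exact h'.deg_le
  | node a b iha ihb =>
      intro h
      cases h with
      | refl => right; simp [deg, deg_under]
      | right _ _ h' => exact ihb h'

/-- Remove the iterated right subtree of degree `d`. -/
def cut : PBT → ℕ → PBT
  | leaf, _ => leaf
  | node a b, d => if deg b = d then a else node a (cut b d)

theorem cut_node {a b : PBT} : cut (node a b) (deg b) = a := by simp [cut]

theorem cut_under {c d : PBT} : ∀ x, cut (under x (node c d)) (deg d) = under x c := by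
  intro x
  induction x with
  | leaf =>
      show cut (node c d) (deg d) = c
      exact cut_node
  | node a b iha ihb =>
      show cut (node a (under b (node c d))) (deg d) = node a (under b c)
      rw [cut]
      have : deg (under b (node c d)) ≠ deg d := by simp [deg_under, deg]; omega
      rw [if_neg this, ihb]

theorem Step.cut_mono {s t : PBT} (h : Step s t) : ∀ r, IsTail r s → IsTail r t →
    deg r < deg s → tle (cut s (deg r)) (cut t (deg r)) := by
  induction h with
  | rotate p q c =>
      intro r hs ht hlt
      have hrc : IsTail r c := by
        cases hs with
        | refl => omega
        | right _ _ h' => exact h'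
      have hdc : deg r ≤ deg c := hrc.deg_le
      show tle (cut (node (node p q) c) (deg r)) (cut (node p (node q c)) (deg r))
      rw [cut, cut]
      have hqc : deg (node q c) ≠ deg r := by simp [deg]; omega
      rw [if_neg hqc, cut]
      by_cases hc : deg c = deg r
      · rw [if_pos hc, if_pos hc]; exact tle.refl _
      · rw [if_neg hc, if_neg hc]; exact tle.rotate _ _ _
  | @left x y z h ih =>
      intro r hs ht hlt
      have hrz : IsTail r z := by
        cases hs with
        | refl => omega
        | right _ _ h' => exact h'
      show tle (cut (node x z) (deg r)) (cut (node y z) (deg r))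
      rw [cut, cut]
      by_cases hz : deg z = deg r
      · rw [if_pos hz, if_pos hz]; exact h.tle'
      · rw [if_neg hz, if_neg hz]; exact tle.node_left _ h.tle'
  | @right x y z h ih =>
      intro r hs ht hlt
      have hrx : IsTail r x := by
        cases hs with
        | refl => omega
        | right _ _ h' => exact h'
      have hry : IsTail r y := by
        cases ht with
        | refl => exfalso; have := h.deg_eq; simp [deg] at hlt; omega
        | right _ _ h' => exact h'
      show tle (cut (node z x) (deg r)) (cut (node z y) (deg r))
      rw [cut, cut]
      by_cases hx : deg x = deg r
      · exfalso
        have h1 : r = x := hrx.eq_of_deg hx.symm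
        have h2 : r = y := hry.eq_of_deg (by rw [← h.deg_eq, hx])
        exact (h1 ▸ h2 ▸ h).ne rfl
      · have hy : deg y ≠ deg r := by rw [← h.deg_eq]; exact hx
        rw [if_neg hx, if_neg hy]
        exact tle.node_right _ (ih r hrx hry (by have := hrx.deg_le; omega))

theorem tle.cut_mono {s t : PBT} (h : tle s t) : ∀ r, IsTail r s → IsTail r t →
    deg r < deg s → tle (cut s (deg r)) (cut t (deg r)) := by
  have h' := tle_iff_rtg.mp h
  clear h
  induction h' with
  | refl => intro r hs ht hlt; exact tle.refl _
  | @tail m t hrm hs ih =>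
      intro r hs' ht hlt
      have hsm : tle s m := tle_iff_rtg.mpr hrm
      -- the tail of m of degree (deg r) is r itself
      obtain ⟨r1, h1, h2, h3⟩ := hsm.tail_mono r hs'
      obtain ⟨r2, h4, h5, h6⟩ := hs.tail_mono r1 h1
      have hr2 : r2 = r := IsTail.unique h4 ht (by omega)
      have hr1 : r = r1 := h3.antisymm (by rw [hr2] at h6; exact h6)
      rw [← hr1] at h1
      have hdm : deg r < deg m := by rw [← hsm.deg_eq]; exact hlt
      exact (ih r hs' h1 hlt).trans (hs.cut_mono r h1 ht hdm)
theorem mem_sum {x y z : PBT} : z ∈ sum x y ↔ tle (overOp x y) z ∧ tle z (under x y) :=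
  Iff.rfl

theorem sum_leaf_right (x : PBT) : sum x leaf = {x} := by
  ext z
  simp only [mem_sum, Set.mem_singleton_iff]
  constructor
  · rintro ⟨h1, h2⟩
    rw [under_leaf] at h2
    exact h2.antisymm h1
  · rintro rfl
    rw [under_leaf]
    exact ⟨tle.refl _, tle.refl _⟩

theorem sum_leaf_left (y : PBT) : sum leaf y = {y} := by
  ext z
  simp only [mem_sum, Set.mem_singleton_iff]
  rw [over_leaf]
  show tle y z ∧ tle z (under leaf y) ↔ z = y
  show tle y z ∧ tle z y ↔ z = y
  exact ⟨fun ⟨h1, h2⟩ => h2.antisymm h1, fun h => h ▸ ⟨tle.refl _, tle.refl _⟩⟩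

theorem deg_mem_sum {x y z : PBT} (h : z ∈ sum x y) : deg z = deg x + deg y := by
  rw [← deg_over x y]
  exact h.1.deg_eq.symm

theorem Step.node_inv : ∀ {s z : PBT}, Step s z → ∀ a b, s = node a b →
    (∃ p q, a = node p q ∧ z = node p (node q b)) ∨
    (∃ a', Step a a' ∧ z = node a' b) ∨
    (∃ b', Step b b' ∧ z = node a b') := by
  intro s z h
  cases h with
  | rotate p q c =>
      intro a b he
      injection he with e1 e2
      exact Or.inl ⟨p, q, e1.symm, by rw [e2]⟩
  | @left u v w h =>
      intro a b he
      injection he with e1 e2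
      exact Or.inr (Or.inl ⟨v, e1 ▸ h, by rw [e2]⟩)
  | @right u v w h =>
      intro a b he
      injection he with e1 e2
      exact Or.inr (Or.inr ⟨v, e2 ▸ h, by rw [e1]⟩)
theorem sum_node : ∀ (xl xr yl yr : PBT),
    sum (node xl xr) (node yl yr) =
      ((node xl) '' sum xr (node yl yr)) ∪ ((fun z => node z yr) '' sum (node xl xr) yl) := by
  suffices key : ∀ (N : ℕ) (xl xr yl yr : PBT),
      deg (node xl xr) + deg (node yl yr) ≤ N →
      sum (node xl xr) (node yl yr) =
      ((node xl) '' sum xr (node yl yr)) ∪ ((fun z => node z yr) '' sum (node xl xr) yl) by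
    intro xl xr yl yr; exact key _ xl xr yl yr (le_refl _)
  intro N
  induction N with
  | zero => intro xl xr yl yr h; exfalso; simp [deg] at h
  | succ N ih =>
    intro xl xr yl yr hN
    have hover : overOp (node xl xr) (node yl yr) = node (overOp (node xl xr) yl) yr := rfl
    have hunder : under (node xl xr) (node yl yr)
        = node xl (under xr (node yl yr)) := rfl
    apply Set.Subset.antisymm
    · -- hard direction
      intro z0 hz0
      obtain ⟨h1, h2⟩ := hz0
      have main : ∀ z, Relation.ReflTransGen Step (overOp (node xl xr) (node yl yr)) z →
          tle z (under (node xl xr) (node yl yr)) →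
          z ∈ ((node xl) '' sum xr (node yl yr)) ∪
            ((fun z => node z yr) '' sum (node xl xr) yl) := by
        intro z hz
        induction hz with
        | refl =>
            intro _
            right
            exact ⟨overOp (node xl xr) yl, ⟨tle.refl _, tle_over_under (node xl xr) yl⟩, rfl⟩
        | @tail m z hrm hstep ihm =>
            intro hle
            have hmS := ihm ((hstep.tle').trans hle)
            rcases hmS with ⟨w, hw, hm⟩ | ⟨w, hw, hm⟩
            · -- m = node xl w, w ∈ sum xr (node yl yr)
              rcases hstep.node_inv xl w hm.symm with ⟨p, q, hxl, hz⟩ |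
                  ⟨x'', hs', hz⟩ | ⟨w', hs', hz⟩ <;> subst hz
              · -- rotate at root : impossible
                exfalso
                rw [hunder] at hle
                have hd := (tle_node_node hle).1
                rw [hxl] at hd
                simp [deg] at hd
              · -- step inside xl : impossible
                exfalso
                rw [hunder] at hle
                obtain ⟨hd, heq⟩ := tle_node_node hle
                have hdeq : deg xl = deg x'' := hs'.deg_eq
                obtain ⟨hc1, _⟩ := heq (by omega)
                exact hs'.ne (hs'.tle'.antisymm hc1)
              · -- step inside w
                rw [hunder] at hle
                obtain ⟨hd, heq⟩ := tle_node_node hle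
                obtain ⟨_, hc2⟩ := heq rfl
                left
                exact ⟨w', ⟨hw.1.trans hs'.tle', hc2⟩, rfl⟩
            · -- m = node w yr, w ∈ sum (node xl xr) yl
              simp only at hm
              rcases hstep.node_inv w yr hm.symm with ⟨p, q, hw', hz⟩ |
                  ⟨w', hs', hz⟩ | ⟨y'', hs', hz⟩ <;> subst hz
              · -- rotate at root
                cases yl with
                | leaf =>
                    rw [sum_leaf_right] at hw
                    have hwx : w = node xl xr := hw
                    rw [hwx] at hw'
                    injection hw' with e1 e2
                    left
                    refine ⟨node xr yr, ⟨?_, tle_over_under xr (node leaf yr)⟩, ?_⟩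
                    · show tle (node (overOp xr leaf) yr) (node xr yr)
                      show tle (node xr yr) (node xr yr)
                      exact tle.refl _
                    · rw [← e1, ← e2]
                | node yll ylr =>
                    have hsplit := ih xl xr yll ylr (by simp [deg] at hN ⊢; omega)
                    rw [hsplit] at hw
                    rcases hw with ⟨u, hu, he⟩ | ⟨v, hv, he⟩
                    · -- w = node xl u
                      rw [hw'] at he
                      injection he with e1 e2
                      left
                      refine ⟨node q yr, ⟨?_, ?_⟩, ?_⟩
                      · show tle (node (overOp xr (node yll ylr)) yr) (node q yr)
                        rw [← e2]
                        exact tle.node_left _ hu.1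
                      · rw [← e2]
                        exact (tle.node_left _ hu.2).trans
                          (tle_node_under xr (node yll ylr) yr)
                      · rw [e1]
                    · -- w = node v ylr : impossible
                      exfalso
                      simp only at he
                      rw [hw'] at he
                      injection he with e1 e2
                      have htail : IsTail (node q yr) (node p (node q yr)) :=
                        .right _ _ .refl
                      obtain ⟨r', hr1, hr2, _⟩ := hle.tail_mono _ htail
                      have hcases := tail_deg_under (node xl xr) hr1
                      rw [← e2] at hr2
                      simp [deg] at hr2 hcases
                      omega
              · -- step inside w
                right
                refine ⟨w', ⟨hw.1.trans hs'.tle', ?_⟩, rfl⟩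
                have htail : IsTail yr (node w' yr) := .right _ _ .refl
                have htail2 : IsTail yr (under (node xl xr) (node yl yr)) :=
                  isTail_under _ (.right _ _ .refl)
                have hcm := hle.cut_mono yr htail htail2 (by simp [deg])
                rw [cut_node, cut_under (node xl xr)] at hcm
                exact hcm
              · -- step inside yr : impossible
                exfalso
                have htail : IsTail y'' (node w y'') := .right _ _ .refl
                obtain ⟨r', hr1, hr2, hr3⟩ := hle.tail_mono _ htail
                have htail2 : IsTail yr (under (node xl xr) (node yl yr)) :=
                  isTail_under _ (.right _ _ .refl)
                have hry : r' = yr := IsTail.unique hr1 htail2 (by rw [hr2, ← hs'.deg_eq])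
                rw [hry] at hr3
                exact hs'.ne (hs'.tle'.antisymm hr3)
      exact main z0 (tle_iff_rtg.mp h1) h2
    · -- easy direction
      rintro z (⟨w, hw, rfl⟩ | ⟨w, hw, rfl⟩)
      · refine ⟨?_, ?_⟩
        · exact (tle_over_node xl xr (node yl yr)).trans (tle.node_right _ hw.1)
        · rw [hunder]; exact tle.node_right _ hw.2
      · refine ⟨?_, ?_⟩
        · rw [hover]; exact tle.node_left _ hw.1
        · exact (tle.node_left _ hw.2).trans (tle_node_under (node xl xr) yl yr)

theorem mem_sum_shape {x y z : PBT} (h : z ∈ sum x y) (hd : 0 < deg x + deg y) :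
    ∃ a b, z = node a b := by
  cases z with
  | leaf => exfalso; have := deg_mem_sum h; simp [deg] at this; omega
  | node a b => exact ⟨a, b, rfl⟩

theorem sum_assoc : ∀ (a b c : PBT),
    (⋃ w ∈ sum a b, sum w c) = ⋃ w ∈ sum b c, sum a w := by
  suffices key : ∀ (N : ℕ) (a b c : PBT), deg a + deg b + deg c ≤ N →
      (⋃ w ∈ sum a b, sum w c) = ⋃ w ∈ sum b c, sum a w by
    intro a b c; exact key _ a b c (le_refl _)
  intro N
  induction N with
  | zero =>
      intro a b c h
      have ha : a = leaf := by cases a with | leaf => rfl | node u v => simp [deg] at h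
      have hb : b = leaf := by cases b with | leaf => rfl | node u v => simp [deg] at h
      subst ha; subst hb
      ext z
      simp [sum_leaf_left]
  | succ N ih =>
      intro a b c hN
      cases a with
      | leaf => ext z; simp [sum_leaf_left]
      | node al ar =>
      cases c with
      | leaf => ext z; simp [sum_leaf_right]
      | node cl cr =>
      cases b with
      | leaf =>
          ext z
          simp [sum_leaf_left, sum_leaf_right]
      | node bl br =>
      have IH1 := ih ar (node bl br) (node cl cr) (by simp [deg] at hN ⊢; omega)
      have IH2 := ih (node al ar) (node bl br) cl (by simp [deg] at hN ⊢; omega)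
      ext z
      simp only [Set.mem_iUnion, exists_prop]
      constructor
      · rintro ⟨w, hw, hzw⟩
        obtain ⟨w1, w2, rfl⟩ := mem_sum_shape hw (by simp [deg] <;> omega)
        rw [sum_node w1 w2 cl cr] at hzw
        rcases hzw with ⟨v, hv, rfl⟩ | ⟨v, hv, rfl⟩
        · rw [sum_node al ar bl br] at hw
          rcases hw with ⟨u, hu, he⟩ | ⟨u, hu, he⟩
          · -- w = node al u
            injection he with e1 e2
            subst e1; subst e2
            have hvmem : v ∈ ⋃ u ∈ sum ar (node bl br), sum u (node cl cr) := by
              simp only [Set.mem_iUnion, exists_prop]; exact ⟨u, hu, hv⟩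
            rw [IH1] at hvmem
            simp only [Set.mem_iUnion, exists_prop] at hvmem
            obtain ⟨w', hw', hv'⟩ := hvmem
            obtain ⟨t1, t2, rfl⟩ := mem_sum_shape hw' (by simp [deg] <;> omega)
            refine ⟨node t1 t2, hw', ?_⟩
            rw [sum_node al ar t1 t2]
            exact Or.inl ⟨v, hv', rfl⟩
          · -- w = node u br
            simp only at he
            injection he with e1 e2
            subst e1; subst e2
            refine ⟨node bl v, ?_, ?_⟩
            · rw [sum_node bl br cl cr]
              exact Or.inl ⟨v, hv, rfl⟩
            · rw [sum_node al ar bl v]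
              exact Or.inr ⟨u, hu, rfl⟩
        · -- z = node v cr, v ∈ sum w cl
          have hvmem : v ∈ ⋃ w ∈ sum (node al ar) (node bl br), sum w cl := by
            simp only [Set.mem_iUnion, exists_prop]; exact ⟨node w1 w2, hw, hv⟩
          rw [IH2] at hvmem
          simp only [Set.mem_iUnion, exists_prop] at hvmem
          obtain ⟨u', hu', hv'⟩ := hvmem
          refine ⟨node u' cr, ?_, ?_⟩
          · rw [sum_node bl br cl cr]
            exact Or.inr ⟨u', hu', rfl⟩
          · rw [sum_node al ar u' cr]
            exact Or.inr ⟨v, hv', rfl⟩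
      · rintro ⟨w', hw', hzw⟩
        obtain ⟨t1, t2, rfl⟩ := mem_sum_shape hw' (by simp [deg] <;> omega)
        rw [sum_node al ar t1 t2] at hzw
        rcases hzw with ⟨v, hv, rfl⟩ | ⟨v, hv, rfl⟩
        · -- z = node al v, v ∈ sum ar w'
          have hvmem : v ∈ ⋃ w ∈ sum (node bl br) (node cl cr), sum ar w := by
            simp only [Set.mem_iUnion, exists_prop]; exact ⟨node t1 t2, hw', hv⟩
          rw [← IH1] at hvmem
          simp only [Set.mem_iUnion, exists_prop] at hvmem
          obtain ⟨u, hu, hv'⟩ := hvmem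
          refine ⟨node al u, ?_, ?_⟩
          · rw [sum_node al ar bl br]
            exact Or.inl ⟨u, hu, rfl⟩
          · rw [sum_node al u cl cr]
            exact Or.inl ⟨v, hv', rfl⟩
        · -- z = node v t2, v ∈ sum a t1
          rw [sum_node bl br cl cr] at hw'
          rcases hw' with ⟨u', hu', he⟩ | ⟨u', hu', he⟩
          · -- w' = node bl u'
            injection he with e1 e2
            subst e1; subst e2
            refine ⟨node v br, ?_, ?_⟩
            · rw [sum_node al ar bl br]
              exact Or.inr ⟨v, hv, rfl⟩
            · rw [sum_node v br cl cr]
              exact Or.inl ⟨u', hu', rfl⟩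
          · -- w' = node u' cr
            simp only at he
            injection he with e1 e2
            subst e1; subst e2
            have hvmem : v ∈ ⋃ u ∈ sum (node bl br) cl, sum (node al ar) u := by
              simp only [Set.mem_iUnion, exists_prop]; exact ⟨u', hu', hv⟩
            rw [← IH2] at hvmem
            simp only [Set.mem_iUnion, exists_prop] at hvmem
            obtain ⟨w, hw, hv'⟩ := hvmem
            obtain ⟨q1, q2, rfl⟩ := mem_sum_shape hw (by simp [deg] <;> omega)
            refine ⟨node q1 q2, hw, ?_⟩
            rw [sum_node q1 q2 cl cr]
            exact Or.inr ⟨v, hv', rfl⟩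

theorem shape_of_ne_leaf {t : PBT} (h : t ≠ leaf) : ∃ p q, t = node p q := by
  cases t with
  | leaf => exact absurd rfl h
  | node p q => exact ⟨p, q, rfl⟩

theorem lsum_eq (p q d : PBT) : lsum (node p q) d = (node p) '' sum q d := by
  cases d with
  | leaf =>
      show ({node p q} : Set PBT) = _
      rw [sum_leaf_right]
      simp
  | node dl dr => rfl

theorem rsum_eq (c u v : PBT) : rsum c (node u v) = (fun w => node w v) '' sum c u := by
  cases c with
  | leaf =>
      show ({node u v} : Set PBT) = _
      rw [sum_leaf_left]
      simp
  | node cl cr => rfl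

theorem rsum_ne_leaf {c d t : PBT} (hd : d ≠ leaf) (h : t ∈ rsum c d) : t ≠ leaf := by
  obtain ⟨u, v, rfl⟩ := shape_of_ne_leaf hd
  rw [rsum_eq] at h
  obtain ⟨w, _, rfl⟩ := h
  simp

theorem lsum_ne_leaf {c d t : PBT} (hc : c ≠ leaf) (h : t ∈ lsum c d) : t ≠ leaf := by
  obtain ⟨p, q, rfl⟩ := shape_of_ne_leaf hc
  rw [lsum_eq] at h
  obtain ⟨w, _, rfl⟩ := h
  simp

theorem mem_glsum {A B : Set PBT} {t : PBT} :
    t ∈ glsum A B ↔ ∃ x ∈ A, ∃ y ∈ B, t ∈ lsum x y := by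
  simp [glsum]

theorem mem_grsum {A B : Set PBT} {t : PBT} :
    t ∈ grsum A B ↔ ∃ x ∈ A, ∃ y ∈ B, t ∈ rsum x y := by
  simp [grsum]

theorem mem_gsum {A B : Set PBT} {t : PBT} :
    t ∈ gsum A B ↔ ∃ x ∈ A, ∃ y ∈ B, t ∈ sum x y := by
  simp [gsum]

theorem tmul_ne_leaf {B : Set PBT} (hB : ∀ b ∈ B, b ≠ leaf) {x : PBT} (hx : x ≠ leaf) :
    ∀ t ∈ tmul x B, t ≠ leaf := by
  obtain ⟨l, r, rfl⟩ := shape_of_ne_leaf hx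
  intro t ht
  have ht' : t ∈ glsum (grsum (tmul l B) B) (tmul r B) := ht
  rw [mem_glsum] at ht'
  obtain ⟨c, hc, d, hd, htc⟩ := ht'
  rw [mem_grsum] at hc
  obtain ⟨u, hu, b, hb, hcu⟩ := hc
  exact lsum_ne_leaf (rsum_ne_leaf (hB b hb) hcu) htc

theorem sum_split {v v' : PBT} (hv : v ≠ leaf) (hv' : v' ≠ leaf) :
    sum v v' = lsum v v' ∪ rsum v v' := by
  obtain ⟨a, b, rfl⟩ := shape_of_ne_leaf hv
  obtain ⟨c, d, rfl⟩ := shape_of_ne_leaf hv'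
  rw [sum_node, lsum_eq, rsum_eq]

theorem gsum_split {V W : Set PBT} (hV : ∀ v ∈ V, v ≠ leaf) (hW : ∀ w ∈ W, w ≠ leaf) :
    gsum V W = glsum V W ∪ grsum V W := by
  ext z
  simp only [mem_gsum, Set.mem_union, mem_glsum, mem_grsum]
  constructor
  · rintro ⟨v, hv, w, hw, hz⟩
    rw [sum_split (hV v hv) (hW w hw)] at hz
    rcases hz with hz | hz
    · exact Or.inl ⟨v, hv, w, hw, hz⟩
    · exact Or.inr ⟨v, hv, w, hw, hz⟩
  · rintro (⟨v, hv, w, hw, hz⟩ | ⟨v, hv, w, hw, hz⟩) <;>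
      refine ⟨v, hv, w, hw, ?_⟩ <;> rw [sum_split (hV v hv) (hW w hw)]
    · exact Or.inl hz
    · exact Or.inr hz

theorem glsum_glsum {C D E : Set PBT} (hC : ∀ c ∈ C, c ≠ leaf) :
    glsum (glsum C D) E = glsum C (gsum D E) := by
  ext z
  simp only [mem_glsum, mem_gsum]
  constructor
  · rintro ⟨t, ⟨c, hc, d, hd, ht⟩, e, he, hz⟩
    obtain ⟨p, q, rfl⟩ := shape_of_ne_leaf (hC c hc)
    rw [lsum_eq] at ht
    obtain ⟨w, hw, rfl⟩ := ht
    rw [lsum_eq] at hz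
    obtain ⟨v, hv, rfl⟩ := hz
    have hv2 : v ∈ ⋃ w ∈ sum q d, sum w e := by
      simp only [Set.mem_iUnion, exists_prop]; exact ⟨w, hw, hv⟩
    rw [sum_assoc] at hv2
    simp only [Set.mem_iUnion, exists_prop] at hv2
    obtain ⟨u, hu, hv'⟩ := hv2
    refine ⟨node p q, hc, u, ⟨d, hd, e, he, hu⟩, ?_⟩
    rw [lsum_eq]
    exact ⟨v, hv', rfl⟩
  · rintro ⟨c, hc, u, ⟨d, hd, e, he, hu⟩, hz⟩
    obtain ⟨p, q, rfl⟩ := shape_of_ne_leaf (hC c hc)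
    rw [lsum_eq] at hz
    obtain ⟨v, hv, rfl⟩ := hz
    have hv2 : v ∈ ⋃ u ∈ sum d e, sum q u := by
      simp only [Set.mem_iUnion, exists_prop]; exact ⟨u, hu, hv⟩
    rw [← sum_assoc] at hv2
    simp only [Set.mem_iUnion, exists_prop] at hv2
    obtain ⟨w, hw, hv'⟩ := hv2
    refine ⟨node p w, ⟨node p q, hc, d, hd, ?_⟩, e, he, ?_⟩
    · rw [lsum_eq]; exact ⟨w, hw, rfl⟩
    · rw [lsum_eq]; exact ⟨v, hv', rfl⟩

theorem grsum_glsum {G H K I : Set PBT} (hK : ∀ b ∈ K, b ≠ leaf) :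
    grsum G (glsum (grsum H K) I) = glsum (grsum (gsum G H) K) I := by
  ext z
  simp only [mem_glsum, mem_grsum, mem_gsum]
  constructor
  · rintro ⟨g, hg, j, ⟨c, ⟨h, hh, b, hb, hc⟩, i, hi, hj⟩, hz⟩
    obtain ⟨bl, br, rfl⟩ := shape_of_ne_leaf (hK b hb)
    rw [rsum_eq] at hc
    obtain ⟨w, hw, rfl⟩ := hc
    rw [lsum_eq] at hj
    obtain ⟨v, hv, rfl⟩ := hj
    rw [rsum_eq] at hz
    obtain ⟨u, hu, rfl⟩ := hz
    have hu2 : u ∈ ⋃ w ∈ sum h bl, sum g w := by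
      simp only [Set.mem_iUnion, exists_prop]; exact ⟨w, hw, hu⟩
    rw [← sum_assoc] at hu2
    simp only [Set.mem_iUnion, exists_prop] at hu2
    obtain ⟨s, hs, hu'⟩ := hu2
    refine ⟨node u br, ⟨s, ⟨g, hg, h, hh, hs⟩, node bl br, hb, ?_⟩, i, hi, ?_⟩
    · rw [rsum_eq]; exact ⟨u, hu', rfl⟩
    · rw [lsum_eq]; exact ⟨v, hv, rfl⟩
  · rintro ⟨c, ⟨s, ⟨g, hg, h, hh, hs⟩, b, hb, hc⟩, i, hi, hz⟩
    obtain ⟨bl, br, rfl⟩ := shape_of_ne_leaf (hK b hb)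
    rw [rsum_eq] at hc
    obtain ⟨u, hu, rfl⟩ := hc
    rw [lsum_eq] at hz
    obtain ⟨v, hv, rfl⟩ := hz
    have hu2 : u ∈ ⋃ s ∈ sum g h, sum s bl := by
      simp only [Set.mem_iUnion, exists_prop]; exact ⟨s, hs, hu⟩
    rw [sum_assoc] at hu2
    simp only [Set.mem_iUnion, exists_prop] at hu2
    obtain ⟨w, hw, hu'⟩ := hu2
    refine ⟨g, hg, node w v, ⟨node w br, ⟨h, hh, node bl br, hb, ?_⟩, i, hi, ?_⟩, ?_⟩
    · rw [rsum_eq]; exact ⟨w, hw, rfl⟩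
    · rw [lsum_eq]; exact ⟨v, hv, rfl⟩
    · rw [rsum_eq]; exact ⟨u, hu', rfl⟩

theorem glsum_biUnion_right {A : Set PBT} {S : Set PBT} {f : PBT → Set PBT} :
    glsum A (⋃ i ∈ S, f i) = ⋃ i ∈ S, glsum A (f i) := by
  ext z
  simp only [mem_glsum, Set.mem_iUnion, exists_prop, mem_glsum]
  constructor
  · rintro ⟨x, hx, y, ⟨i, hi, hy⟩, hz⟩
    exact ⟨i, hi, x, hx, y, hy, hz⟩
  · rintro ⟨i, hi, x, hx, y, hy, hz⟩
    exact ⟨x, hx, y, ⟨i, hi, hy⟩, hz⟩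

theorem glsum_biUnion_left {S : Set PBT} {f : PBT → Set PBT} {A : Set PBT} :
    glsum (⋃ i ∈ S, f i) A = ⋃ i ∈ S, glsum (f i) A := by
  ext z
  simp only [mem_glsum, Set.mem_iUnion, exists_prop, mem_glsum]
  constructor
  · rintro ⟨x, ⟨i, hi, hx⟩, y, hy, hz⟩
    exact ⟨i, hi, x, hx, y, hy, hz⟩
  · rintro ⟨i, hi, x, hx, y, hy, hz⟩
    exact ⟨x, ⟨i, hi, hx⟩, y, hy, hz⟩

theorem grsum_biUnion_left {S : Set PBT} {f : PBT → Set PBT} {A : Set PBT} :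
    grsum (⋃ i ∈ S, f i) A = ⋃ i ∈ S, grsum (f i) A := by
  ext z
  simp only [mem_grsum, Set.mem_iUnion, exists_prop, mem_grsum]
  constructor
  · rintro ⟨x, ⟨i, hi, hx⟩, y, hy, hz⟩
    exact ⟨i, hi, x, hx, y, hy, hz⟩
  · rintro ⟨i, hi, x, hx, y, hy, hz⟩
    exact ⟨x, ⟨i, hi, hx⟩, y, hy, hz⟩

theorem tmul_node (l r : PBT) (B : Set PBT) :
    tmul (node l r) B = glsum (grsum (tmul l B) B) (tmul r B) := rfl

theorem tmul_distrib {B : Set PBT} (hB : ∀ b ∈ B, b ≠ leaf) :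
    ∀ (N : ℕ) (x x' : PBT), deg x + deg x' ≤ N →
    ((⋃ t ∈ sum x x', tmul t B) = gsum (tmul x B) (tmul x' B)) ∧
    (x ≠ leaf → x' ≠ leaf →
      ((⋃ t ∈ lsum x x', tmul t B) = glsum (tmul x B) (tmul x' B)) ∧
      ((⋃ t ∈ rsum x x', tmul t B) = grsum (tmul x B) (tmul x' B))) := by
  intro N
  induction N with
  | zero =>
      intro x x' hN
      have hx : x = leaf := by cases x with | leaf => rfl | node u v => simp [deg] at hN
      have hx' : x' = leaf := by cases x' with | leaf => rfl | node u v => simp [deg] at hN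
      subst hx; subst hx'
      constructor
      · ext z
        simp [sum_leaf_left, tmul, mem_gsum, sum_leaf_left]
      · intro h; exact absurd rfl h
  | succ N ih =>
      intro x x' hN
      -- P3 in the leaf cases
      by_cases hx : x = leaf
      · subst hx
        constructor
        · ext z
          simp only [sum_leaf_left, Set.mem_iUnion, exists_prop, Set.mem_singleton_iff]
          simp only [tmul, mem_gsum, Set.mem_singleton_iff]
          constructor
          · rintro ⟨t, rfl, hz⟩; exact ⟨leaf, rfl, z, hz, by rw [sum_leaf_left]; rfl⟩
          · rintro ⟨v, rfl, w, hw, hz⟩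
            rw [sum_leaf_left] at hz
            exact ⟨x', rfl, hz ▸ hw⟩
        · intro h; exact absurd rfl h
      by_cases hx' : x' = leaf
      · subst hx'
        constructor
        · ext z
          simp only [sum_leaf_right, Set.mem_iUnion, exists_prop, Set.mem_singleton_iff]
          simp only [tmul, mem_gsum, Set.mem_singleton_iff]
          constructor
          · rintro ⟨t, rfl, hz⟩; exact ⟨z, hz, leaf, rfl, by rw [sum_leaf_right]; rfl⟩
          · rintro ⟨v, hv, w, rfl, hz⟩
            rw [sum_leaf_right] at hz
            exact ⟨x, rfl, hz ▸ hv⟩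
        · intro _ h; exact absurd rfl h
      -- both are nodes
      obtain ⟨xl, xr, rfl⟩ := shape_of_ne_leaf hx
      obtain ⟨x'l, x'r, rfl⟩ := shape_of_ne_leaf hx'
      have hP1 : (⋃ t ∈ lsum (node xl xr) (node x'l x'r), tmul t B)
          = glsum (tmul (node xl xr) B) (tmul (node x'l x'r) B) := by
        have hC : ∀ c ∈ grsum (tmul xl B) B, c ≠ leaf := by
          intro c hc
          rw [mem_grsum] at hc
          obtain ⟨u, hu, b, hb, hc⟩ := hc
          exact rsum_ne_leaf (hB b hb) hc
        have hP3 := (ih xr (node x'l x'r) (by simp [deg] at hN ⊢; omega)).1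
        calc (⋃ t ∈ lsum (node xl xr) (node x'l x'r), tmul t B)
            = ⋃ w ∈ sum xr (node x'l x'r), tmul (node xl w) B := by
              rw [lsum_eq]
              ext z
              simp only [Set.mem_iUnion, exists_prop, Set.mem_image]
              constructor
              · rintro ⟨t, ⟨w, hw, rfl⟩, hz⟩; exact ⟨w, hw, hz⟩
              · rintro ⟨w, hw, hz⟩; exact ⟨node xl w, ⟨w, hw, rfl⟩, hz⟩
          _ = ⋃ w ∈ sum xr (node x'l x'r), glsum (grsum (tmul xl B) B) (tmul w B) := by
              simp only [tmul_node]
          _ = glsum (grsum (tmul xl B) B) (⋃ w ∈ sum xr (node x'l x'r), tmul w B) := by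
              rw [glsum_biUnion_right]
          _ = glsum (grsum (tmul xl B) B) (gsum (tmul xr B) (tmul (node x'l x'r) B)) := by
              rw [hP3]
          _ = glsum (glsum (grsum (tmul xl B) B) (tmul xr B)) (tmul (node x'l x'r) B) := by
              rw [glsum_glsum hC]
          _ = glsum (tmul (node xl xr) B) (tmul (node x'l x'r) B) := by
              simp only [tmul_node]
      have hP2 : (⋃ t ∈ rsum (node xl xr) (node x'l x'r), tmul t B)
          = grsum (tmul (node xl xr) B) (tmul (node x'l x'r) B) := by
        have hP3 := (ih (node xl xr) x'l (by simp [deg] at hN ⊢; omega)).1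
        calc (⋃ t ∈ rsum (node xl xr) (node x'l x'r), tmul t B)
            = ⋃ w ∈ sum (node xl xr) x'l, tmul (node w x'r) B := by
              rw [rsum_eq]
              ext z
              simp only [Set.mem_iUnion, exists_prop, Set.mem_image]
              constructor
              · rintro ⟨t, ⟨w, hw, rfl⟩, hz⟩; exact ⟨w, hw, hz⟩
              · rintro ⟨w, hw, hz⟩; exact ⟨node w x'r, ⟨w, hw, rfl⟩, hz⟩
          _ = ⋃ w ∈ sum (node xl xr) x'l, glsum (grsum (tmul w B) B) (tmul x'r B) := by
              simp only [tmul_node]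
          _ = glsum (grsum (⋃ w ∈ sum (node xl xr) x'l, tmul w B) B) (tmul x'r B) := by
              rw [grsum_biUnion_left, glsum_biUnion_left]
          _ = glsum (grsum (gsum (tmul (node xl xr) B) (tmul x'l B)) B) (tmul x'r B) := by
              rw [hP3]
          _ = grsum (tmul (node xl xr) B) (glsum (grsum (tmul x'l B) B) (tmul x'r B)) := by
              rw [grsum_glsum hB]
          _ = grsum (tmul (node xl xr) B) (tmul (node x'l x'r) B) := by
              simp only [tmul_node]
      refine ⟨?_, fun _ _ => ⟨hP1, hP2⟩⟩
      calc (⋃ t ∈ sum (node xl xr) (node x'l x'r), tmul t B)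
          = (⋃ t ∈ lsum (node xl xr) (node x'l x'r), tmul t B) ∪
            (⋃ t ∈ rsum (node xl xr) (node x'l x'r), tmul t B) := by
            rw [sum_split hx hx']
            exact Set.biUnion_union _ _ _
        _ = glsum (tmul (node xl xr) B) (tmul (node x'l x'r) B) ∪
            grsum (tmul (node xl xr) B) (tmul (node x'l x'r) B) := by rw [hP1, hP2]
        _ = gsum (tmul (node xl xr) B) (tmul (node x'l x'r) B) := by
            rw [gsum_split (tmul_ne_leaf hB hx) (tmul_ne_leaf hB hx')]

theorem mem_gmul {A B : Set PBT} {t : PBT} :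
    t ∈ gmul A B ↔ ∃ x ∈ A, t ∈ tmul x B := by
  simp [gmul]


end PBT

open PBT in
/-- multiplication of groves is left distributive overOp the left
sum, the right sum and the sum. -/
theorem gmul_left_distrib (n n' m : ℕ) (hn : 0 < n) (hn' : 0 < n') (hm : 0 < m)
    (A A' B : Set PBT) (hA : Grove n A) (hA' : Grove n' A') (hB : Grove m B) :
    gmul (glsum A A') B = glsum (gmul A B) (gmul A' B) ∧
    gmul (grsum A A') B = grsum (gmul A B) (gmul A' B) ∧
    gmul (gsum A A') B = gsum (gmul A B) (gmul A' B) := by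
  have hne : ∀ (k : ℕ), 0 < k → ∀ (C : Set PBT), Grove k C → ∀ x ∈ C, x ≠ leaf := by
    intro k hk C hC x hx he
    have := hC.2 x hx
    rw [he] at this
    simp [deg] at this
    omega
  have hAne := hne n hn A hA
  have hA'ne := hne n' hn' A' hA'
  have hBne := hne m hm B hB
  refine ⟨?_, ?_, ?_⟩
  · ext z
    constructor
    · intro hz
      obtain ⟨t, ht, hzt⟩ := mem_gmul.mp hz
      rw [mem_glsum] at ht
      obtain ⟨x, hx, x', hx', htl⟩ := ht
      have hP1 := ((tmul_distrib hBne (deg x + deg x') x x' le_rfl).2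
        (hAne x hx) (hA'ne x' hx')).1
      have h2 : z ∈ ⋃ t ∈ lsum x x', tmul t B := by
        simp only [Set.mem_iUnion, exists_prop]; exact ⟨t, htl, hzt⟩
      rw [hP1, mem_glsum] at h2
      obtain ⟨v, hv, v', hv', hzl⟩ := h2
      exact mem_glsum.mpr ⟨v, mem_gmul.mpr ⟨x, hx, hv⟩, v', mem_gmul.mpr ⟨x', hx', hv'⟩, hzl⟩
    · intro hz
      obtain ⟨v, hv, v', hv', hzl⟩ := mem_glsum.mp hz
      obtain ⟨x, hx, hvx⟩ := mem_gmul.mp hv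
      obtain ⟨x', hx', hvx'⟩ := mem_gmul.mp hv'
      have hP1 := ((tmul_distrib hBne (deg x + deg x') x x' le_rfl).2
        (hAne x hx) (hA'ne x' hx')).1
      have h2 : z ∈ glsum (tmul x B) (tmul x' B) :=
        mem_glsum.mpr ⟨v, hvx, v', hvx', hzl⟩
      rw [← hP1] at h2
      simp only [Set.mem_iUnion, exists_prop] at h2
      obtain ⟨t, htl, hzt⟩ := h2
      exact mem_gmul.mpr ⟨t, mem_glsum.mpr ⟨x, hx, x', hx', htl⟩, hzt⟩
  · ext z
    constructor
    · intro hz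
      obtain ⟨t, ht, hzt⟩ := mem_gmul.mp hz
      rw [mem_grsum] at ht
      obtain ⟨x, hx, x', hx', htl⟩ := ht
      have hP2 := ((tmul_distrib hBne (deg x + deg x') x x' le_rfl).2
        (hAne x hx) (hA'ne x' hx')).2
      have h2 : z ∈ ⋃ t ∈ rsum x x', tmul t B := by
        simp only [Set.mem_iUnion, exists_prop]; exact ⟨t, htl, hzt⟩
      rw [hP2, mem_grsum] at h2
      obtain ⟨v, hv, v', hv', hzl⟩ := h2
      exact mem_grsum.mpr ⟨v, mem_gmul.mpr ⟨x, hx, hv⟩, v', mem_gmul.mpr ⟨x', hx', hv'⟩, hzl⟩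
    · intro hz
      obtain ⟨v, hv, v', hv', hzl⟩ := mem_grsum.mp hz
      obtain ⟨x, hx, hvx⟩ := mem_gmul.mp hv
      obtain ⟨x', hx', hvx'⟩ := mem_gmul.mp hv'
      have hP2 := ((tmul_distrib hBne (deg x + deg x') x x' le_rfl).2
        (hAne x hx) (hA'ne x' hx')).2
      have h2 : z ∈ grsum (tmul x B) (tmul x' B) :=
        mem_grsum.mpr ⟨v, hvx, v', hvx', hzl⟩
      rw [← hP2] at h2
      simp only [Set.mem_iUnion, exists_prop] at h2
      obtain ⟨t, htl, hzt⟩ := h2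
      exact mem_gmul.mpr ⟨t, mem_grsum.mpr ⟨x, hx, x', hx', htl⟩, hzt⟩
  · ext z
    constructor
    · intro hz
      obtain ⟨t, ht, hzt⟩ := mem_gmul.mp hz
      rw [mem_gsum] at ht
      obtain ⟨x, hx, x', hx', htl⟩ := ht
      have hP3 := (tmul_distrib hBne (deg x + deg x') x x' le_rfl).1
      have h2 : z ∈ ⋃ t ∈ sum x x', tmul t B := by
        simp only [Set.mem_iUnion, exists_prop]; exact ⟨t, htl, hzt⟩
      rw [hP3, mem_gsum] at h2
      obtain ⟨v, hv, v', hv', hzl⟩ := h2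
      exact mem_gsum.mpr ⟨v, mem_gmul.mpr ⟨x, hx, hv⟩, v', mem_gmul.mpr ⟨x', hx', hv'⟩, hzl⟩
    · intro hz
      obtain ⟨v, hv, v', hv', hzl⟩ := mem_gsum.mp hz
      obtain ⟨x, hx, hvx⟩ := mem_gmul.mp hv
      obtain ⟨x', hx', hvx'⟩ := mem_gmul.mp hv'
      have hP3 := (tmul_distrib hBne (deg x + deg x') x x' le_rfl).1
      have h2 : z ∈ gsum (tmul x B) (tmul x' B) :=
        mem_gsum.mpr ⟨v, hvx, v', hvx', hzl⟩
      rw [← hP3] at h2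
      simp only [Set.mem_iUnion, exists_prop] at h2
      obtain ⟨t, htl, hzt⟩ := h2
      exact mem_gmul.mpr ⟨t, mem_gsum.mpr ⟨x, hx, x', hx', htl⟩, hzt⟩
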